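/- Let 0 < r < 1 and let m ∈ (1/2, 3/2) satisfy 2rm = (m − 1/2)²(m + 3/2). Then the numbers λ = m − 1/2 and λ′ = (2m + 3)²/(8m²(2m − 1)) satisfy 0 < λ < 1 and λ′ > 1. -/
import Mathlib

/-- **Eigenvalues at the saddle fixed point `(0, m₃)`.**
Let `0 < r < 1` and `m ∈ (1/2, 3/2)` satisfy `2rm = (m − 1/2)²(m + 3/2)`.  Then
`λ = m − 1/2` and `λ' = (2m + 3)²/(8m²(2m − 1))` satisfy `0 < λ < 1` and `λ' > 1`. -/
theorem saddle_eigenvalues (r m : ℝ) (hr0 : 0 < r) (hr1 : r < 1)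
    (hm : m ∈ Set.Ioo (1 / 2 : ℝ) (3 / 2))
    (heq : 2 * r * m = (m - 1 / 2) ^ 2 * (m + 3 / 2)) :
    0 < m - 1 / 2 ∧ m - 1 / 2 < 1 ∧
    1 < (2 * m + 3) ^ 2 / (8 * m ^ 2 * (2 * m - 1)) := by
  obtain ⟨h1, h2⟩ := hm
  refine ⟨by linarith, by linarith, ?_⟩
  rw [lt_div_iff₀ (by nlinarith)]
  nlinarith [mul_pos (by linarith : (0:ℝ) < 3 - 2 * m) (by nlinarith : (0:ℝ) < 8 * m ^ 2 + 6 * m + 3)]
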